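/- Suppose each link performance function t_a is continuous, and let f : [0, T] → (K → ℝ) be a continuously differentiable solution of the route-choice dynamical system f'(τ) k = −J_k(f(τ)). If f(0) k ≥ 0 for all k ∈ K, then f(τ) k ≥ 0 for all k ∈ K and all τ ∈ [0, T]; i.e., trajectories cannot cross the boundary f k = 0 and route flows remain nonnegative. -/
import Mathlib


open Finset

/-- Link flow on arc `a` induced by route flows `f`. -/
noncomputable def linkFlow {A K : Type*} [Fintype K] (δ : A → K → ℝ)
    (f : K → ℝ) (a : A) : ℝ :=
  ∑ k, δ a k * f k

/-- Travel time on route `k` induced by route flows `f`. -/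
noncomputable def routeTime {A K : Type*} [Fintype A] [Fintype K] (δ : A → K → ℝ)
    (t : A → ℝ → ℝ) (f : K → ℝ) (k : K) : ℝ :=
  ∑ a, t a (linkFlow δ f a) * δ a k

/-- O-D FIFO violation of route `k` at route-flow state `f`. -/
noncomputable def fifoViolation {A W K : Type*} [Fintype A] [Fintype K] [DecidableEq W]
    (od : K → W) (δ : A → K → ℝ) (t : A → ℝ → ℝ) (f : K → ℝ) (k : K) : ℝ :=
  f k * ∑ j ∈ univ.filter (fun j => od j = od k),
    (routeTime δ t f k - routeTime δ t f j) * f j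

theorem route_flows_stay_nonneg {A W K : Type*} [Fintype A] [Fintype W] [Fintype K] [DecidableEq W]
    (od : K → W) (δ : A → K → ℝ) (hδ : ∀ a k, δ a k = 0 ∨ δ a k = 1)
    (t : A → ℝ → ℝ)
    (ht : ∀ a, Continuous (t a)) (T : ℝ) (f : ℝ → K → ℝ)
    (hC1 : ContDiffOn ℝ 1 f (Set.Icc 0 T))
    (hsol : ∀ τ ∈ Set.Icc (0:ℝ) T,
      HasDerivWithinAt f (fun k => -fifoViolation od δ t (f τ) k) (Set.Icc 0 T) τ)
    (h0 : ∀ k, 0 ≤ f 0 k) :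
    ∀ k, ∀ τ ∈ Set.Icc (0:ℝ) T, 0 ≤ f τ k := by

  intro k τ hτ
  have hT : (0:ℝ) ≤ T := le_trans hτ.1 hτ.2
  -- clamp map into Icc 0 T
  set c : ℝ → ℝ := fun s => max 0 (min s T) with hc
  have hc_cont : Continuous c := continuous_const.max (continuous_id.min continuous_const)
  have hc_mem : ∀ s, c s ∈ Set.Icc (0:ℝ) T := fun s =>
    ⟨le_max_left _ _, max_le hT (min_le_right _ _)⟩
  have hc_eq : ∀ s ∈ Set.Icc (0:ℝ) T, c s = s := by
    intro s hs
    simp [hc, min_eq_left hs.2, max_eq_right hs.1]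
  -- continuity of f ∘ c
  have hfc : Continuous (fun s => f (c s)) :=
    (hC1.continuousOn).comp_continuous hc_cont hc_mem
  -- continuity of route times composed
  have hrt : ∀ j : K, Continuous (fun x : K → ℝ => routeTime δ t x j) := by
    intro j
    unfold routeTime linkFlow
    exact continuous_finset_sum _ fun a _ =>
      (((ht a).comp (continuous_finset_sum _ fun i _ =>
        (continuous_const.mul (continuous_apply i)))).mul continuous_const)
  -- the coefficient function
  set g : ℝ → ℝ := fun s => ∑ j ∈ univ.filter (fun j => od j = od k),
      (routeTime δ t (f (c s)) k - routeTime δ t (f (c s)) j) * f (c s) j with hg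
  have hg_cont : Continuous g := by
    apply continuous_finset_sum
    intro j _
    exact (((hrt k).comp hfc).sub ((hrt j).comp hfc)).mul
      ((continuous_apply j).comp hfc)
  -- integral of g
  set G : ℝ → ℝ := fun u => ∫ s in (0:ℝ)..u, g s with hG
  have hG_deriv : ∀ u : ℝ, HasDerivAt G (g u) u := fun u =>
    (hg_cont.integral_hasStrictDerivAt 0 u).hasDerivAt
  -- the auxiliary function h
  set h : ℝ → ℝ := fun s => f s k * Real.exp (G s) with hh
  have hderiv : ∀ s ∈ Set.Icc (0:ℝ) T, HasDerivWithinAt h 0 (Set.Icc 0 T) s := by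
    intro s hs
    have h1 : HasDerivWithinAt (fun u => f u k) (-fifoViolation od δ t (f s) k)
        (Set.Icc 0 T) s := (hasDerivWithinAt_pi.mp (hsol s hs)) k
    have h2 : HasDerivWithinAt (fun u => Real.exp (G u))
        (Real.exp (G s) * g s) (Set.Icc 0 T) s :=
      ((hG_deriv s).exp).hasDerivWithinAt
    have h3 := h1.mul h2
    have hfix : fifoViolation od δ t (f s) k = f s k * g s := by
      simp [fifoViolation, hg, hc_eq s hs]
    have : -fifoViolation od δ t (f s) k * Real.exp (G s)
        + f s k * (Real.exp (G s) * g s) = 0 := by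
      rw [hfix]; ring
    rw [this] at h3
    exact h3
  have hconst : h τ = h 0 := by
    have := Convex.norm_image_sub_le_of_norm_hasDerivWithin_le
      (f' := fun _ => (0:ℝ)) (C := 0) hderiv (fun x _ => by simp) (convex_Icc 0 T)
      (Set.left_mem_Icc.mpr hT) hτ
    have h0' : ‖h τ - h 0‖ ≤ 0 := by simpa using this
    have := norm_le_zero_iff.mp h0'
    linarith [sub_eq_zero.mp this]
  have hG0 : G 0 = 0 := by simp [hG]
  have : f τ k * Real.exp (G τ) = f 0 k := by
    have : h τ = f 0 k := by rw [hconst]; simp [hh, hG0]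
    simpa [hh] using this
  have hpos : 0 < Real.exp (G τ) := Real.exp_pos _
  nlinarith [h0 k]
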